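/- arXiv:1609.01269 — 8 statements merged into one kernel-verified Lean document; each statement's English description precedes it below -/
import Mathlib

section
/- Let f : ℝ → ℝ be five times continuously differentiable. Then for every λ ∈ ℝ, λ⁶·f⁽⁵⁾(λ)·f″(λ) = −60λ³·(f″(λ))² + 9λ⁵·(f‴(λ))² + g′(λ), where g : ℝ → ℝ is the (differentiable) function g(λ) = λ⁶·f⁽⁴⁾(λ)·f″(λ) − 6λ⁵·f‴(λ)·f″(λ) + 15λ⁴·(f″(λ))² − (1/2)·λ⁶·(f‴(λ))². -/
/-- Differentiating-by-parts formula of type `λ⁶ f⁽⁵⁾ f″`: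
`λ⁶ f⁽⁵⁾ f″ = −60λ³ (f″)² + 9λ⁵ (f‴)² + g′` with
`g(λ) = λ⁶ f⁽⁴⁾ f″ − 6λ⁵ f‴ f″ + 15λ⁴ (f″)² − (1/2) λ⁶ (f‴)²`. -/
theorem diff_by_parts_lambda6 (f : ℝ → ℝ) (hf : ContDiff ℝ 5 f) (l : ℝ) :
    l ^ 6 * iteratedDeriv 5 f l * iteratedDeriv 2 f l =
      -60 * l ^ 3 * (iteratedDeriv 2 f l) ^ 2 + 9 * l ^ 5 * (iteratedDeriv 3 f l) ^ 2 +
      deriv (fun t => t ^ 6 * iteratedDeriv 4 f t * iteratedDeriv 2 f t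
        - 6 * t ^ 5 * iteratedDeriv 3 f t * iteratedDeriv 2 f t
        + 15 * t ^ 4 * (iteratedDeriv 2 f t) ^ 2
        - (1 / 2) * t ^ 6 * (iteratedDeriv 3 f t) ^ 2) l := by
  have hd : ∀ k : ℕ, k < 5 →
      HasDerivAt (iteratedDeriv k f) (iteratedDeriv (k + 1) f l) l := by
    intro k hk
    have h1 : Differentiable ℝ (iteratedDeriv k f) :=
      hf.differentiable_iteratedDeriv k (by exact_mod_cast hk)
    have := (h1 l).hasDerivAt
    rwa [show deriv (iteratedDeriv k f) l = iteratedDeriv (k + 1) f l by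
      rw [iteratedDeriv_succ]] at this
  have h2 := hd 2 (by norm_num)
  have h3 := hd 3 (by norm_num)
  have h4 := hd 4 (by norm_num)
  set a := iteratedDeriv 2 f l
  set b := iteratedDeriv 3 f l
  set c := iteratedDeriv 4 f l
  set d := iteratedDeriv 5 f l
  have hg : HasDerivAt (fun t => t ^ 6 * iteratedDeriv 4 f t * iteratedDeriv 2 f t
        - 6 * t ^ 5 * iteratedDeriv 3 f t * iteratedDeriv 2 f t
        + 15 * t ^ 4 * (iteratedDeriv 2 f t) ^ 2
        - (1 / 2) * t ^ 6 * (iteratedDeriv 3 f t) ^ 2)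
      (((6 * l ^ 5 * c + l ^ 6 * d) * a + l ^ 6 * c * b)
        - ((6 * (5 * l ^ 4) * b + 6 * l ^ 5 * c) * a + 6 * l ^ 5 * b * b)
        + (15 * (4 * l ^ 3) * a ^ 2 + 15 * l ^ 4 * (2 * a * b))
        - ((1 / 2) * (6 * l ^ 5) * b ^ 2 + (1 / 2) * l ^ 6 * (2 * b * c))) l := by
    have hp : ∀ n : ℕ, HasDerivAt (fun t : ℝ => t ^ n) (n * l ^ (n - 1)) l :=
      fun n => hasDerivAt_pow n l
    have e1 := (((hp 6).mul h4).mul h2)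
    have e2 := ((((hp 5).const_mul 6).mul h3).mul h2)
    have e3 := (((hp 4).const_mul 15).mul (h2.pow 2))
    have e4 := (((hp 6).const_mul (1/2 : ℝ)).mul (h3.pow 2))
    have := ((e1.sub e2).add e3).sub e4
    refine this.congr_deriv ?_
    simp only [Pi.mul_apply, Pi.pow_apply]
    push_cast
    ring
  rw [hg.deriv]
  ring
end

section
/- For every natural number n ≥ 9 and every real number k with 0 < k < (n−8)/2, one has 6k⁴ + (144−12n)k³ + (6n²−204n+994)k² + (60n²−850n+2732)k + 94n²−1012n+2644 > 0. -/
/-- Positivity of the coefficient `Bb₁` in the supercritical range `0 < k < (n−8)/2`. -/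
theorem Bb1_pos (n : ℕ) (hn : 9 ≤ n) (k : ℝ) (hk0 : 0 < k) (hk1 : k < ((n : ℝ) - 8) / 2) :
    6 * k ^ 4 + (144 - 12 * (n : ℝ)) * k ^ 3 + (6 * (n : ℝ) ^ 2 - 204 * n + 994) * k ^ 2
      + (60 * (n : ℝ) ^ 2 - 850 * n + 2732) * k + 94 * (n : ℝ) ^ 2 - 1012 * n + 2644 > 0 := by
  set t : ℝ := (n : ℝ) - 8 - 2 * k with ht_def
  have ht : 0 < t := by rw [ht_def]; linarith
  have key : 6 * k ^ 4 + (144 - 12 * (n : ℝ)) * k ^ 3 + (6 * (n : ℝ) ^ 2 - 204 * n + 994) * k ^ 2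
      + (60 * (n : ℝ) ^ 2 - 850 * n + 2732) * k + 94 * (n : ℝ) ^ 2 - 1012 * n + 2644
      = 6 * k ^ 4 + 12 * k ^ 3 * t + 72 * k ^ 3 + 6 * k ^ 2 * t ^ 2 + 132 * k ^ 2 * t
        + 342 * k ^ 2 + 60 * k * t ^ 2 + 486 * k * t + 756 * k + 94 * t ^ 2 + 492 * t + 564 := by
    rw [ht_def]; ring
  rw [key]
  positivity
end

section
/- For every real number n ≥ 21 and every real number k with (n−10)/2 − √n < k < (n−8)/2, one has −38k² + (38n−292)k − 6n² + 132n − 544 > 0. -/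
/-- Positivity of the coefficient `Bb₂` for `n ≥ 21` and `(n−10)/2 − √n < k < (n−8)/2`. -/
theorem Bb2_pos (n k : ℝ) (hn : 21 ≤ n)
    (hk0 : (n - 10) / 2 - Real.sqrt n < k) (hk1 : k < (n - 8) / 2) :
    -38 * k ^ 2 + (38 * n - 292) * k - 6 * n ^ 2 + 132 * n - 544 > 0 := by
  set s := Real.sqrt n with hs
  have hn0 : (0:ℝ) ≤ n := by linarith
  have hs2 : s ^ 2 = n := Real.sq_sqrt hn0
  have hs0 : 0 ≤ s := Real.sqrt_nonneg n
  have hs4 : 4 ≤ s := by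
    nlinarith [hs2, hs0]
  -- value at lower endpoint is positive
  have hqa : 7 * n ^ 2 - 104 * n - 176 * s - 68 > 0 := by
    nlinarith [hs2, hs4, sq_nonneg (n - 21), sq_nonneg (s - 5)]
  have hqb : 7 * n ^ 2 - 28 * n + 32 > 0 := by nlinarith [sq_nonneg (n - 2)]
  have h1 : 0 < k - ((n - 10) / 2 - s) := by linarith
  have h2 : 0 < (n - 8) / 2 - k := by linarith
  nlinarith [mul_pos h1 h2, mul_pos (mul_pos h1 h2) (by linarith : (0:ℝ) < 1 + s),
    mul_pos h1 hqb, mul_pos h2 hqa, hs0, hs2]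
end

section
/- For every natural number n ≥ 9 and every real number k with 0 < k < (n−8)/2, one has −4k⁶ + (12n−88)k⁵ + (−12n²+208n−860)k⁴ + (4n³−152n²+1544n−4304)k³ + (32n³−776n²+5408n−11196)k² + (92n³−1576n²+8428n−14040)k + 64n³−940n²+4368n−6372 > 0. -/
/-- Positivity of the coefficient `Aa₁ = A₁ + a₁` in the supercritical range
`0 < k < (n−8)/2`. -/
theorem Aa1_pos (n : ℕ) (hn : 9 ≤ n) (k : ℝ) (hk0 : 0 < k) (hk1 : k < ((n : ℝ) - 8) / 2) :
    -4 * k ^ 6 + (12 * (n : ℝ) - 88) * k ^ 5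
      + (-12 * (n : ℝ) ^ 2 + 208 * n - 860) * k ^ 4
      + (4 * (n : ℝ) ^ 3 - 152 * n ^ 2 + 1544 * n - 4304) * k ^ 3
      + (32 * (n : ℝ) ^ 3 - 776 * n ^ 2 + 5408 * n - 11196) * k ^ 2
      + (92 * (n : ℝ) ^ 3 - 1576 * n ^ 2 + 8428 * n - 14040) * k
      + 64 * (n : ℝ) ^ 3 - 940 * n ^ 2 + 4368 * n - 6372 > 0 := by
  have hb : (0:ℝ) < (n : ℝ) - 8 - 2 * k := by linarith
  linarith [mul_nonneg (pow_nonneg hk0.le 0) (pow_nonneg hb.le 1),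
    mul_nonneg (pow_nonneg hk0.le 0) (pow_nonneg hb.le 2),
    mul_nonneg (pow_nonneg hk0.le 0) (pow_nonneg hb.le 3),
    mul_nonneg (pow_nonneg hk0.le 1) (pow_nonneg hb.le 0),
    mul_nonneg (pow_nonneg hk0.le 1) (pow_nonneg hb.le 1),
    mul_nonneg (pow_nonneg hk0.le 1) (pow_nonneg hb.le 2),
    mul_nonneg (pow_nonneg hk0.le 1) (pow_nonneg hb.le 3),
    mul_nonneg (pow_nonneg hk0.le 2) (pow_nonneg hb.le 0),
    mul_nonneg (pow_nonneg hk0.le 2) (pow_nonneg hb.le 1),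
    mul_nonneg (pow_nonneg hk0.le 2) (pow_nonneg hb.le 2),
    mul_nonneg (pow_nonneg hk0.le 2) (pow_nonneg hb.le 3),
    mul_nonneg (pow_nonneg hk0.le 3) (pow_nonneg hb.le 0),
    mul_nonneg (pow_nonneg hk0.le 3) (pow_nonneg hb.le 1),
    mul_nonneg (pow_nonneg hk0.le 3) (pow_nonneg hb.le 2),
    mul_nonneg (pow_nonneg hk0.le 3) (pow_nonneg hb.le 3),
    mul_nonneg (pow_nonneg hk0.le 4) (pow_nonneg hb.le 0),
    mul_nonneg (pow_nonneg hk0.le 4) (pow_nonneg hb.le 1),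
    mul_nonneg (pow_nonneg hk0.le 4) (pow_nonneg hb.le 2),
    mul_nonneg (pow_nonneg hk0.le 5) (pow_nonneg hb.le 0),
    mul_nonneg (pow_nonneg hk0.le 5) (pow_nonneg hb.le 1),
    mul_nonneg (pow_nonneg hk0.le 6) (pow_nonneg hb.le 0)]
end

section
/- For every natural number n ≥ 18 and every real number k with max(0, (n−10)/2 − √n) < k < (n−8)/2, one has −28k² + (28n−216)k − 4n² + 96n − 408 > 0. -/
/-- Positivity of the coefficient `Aa₃ = A₃ + a₃` for `n ≥ 18` and
`max(0, (n−10)/2 − √n) < k < (n−8)/2`. -/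
theorem Aa3_pos (n : ℕ) (hn : 18 ≤ n) (k : ℝ)
    (hk0 : max 0 (((n : ℝ) - 10) / 2 - Real.sqrt n) < k) (hk1 : k < ((n : ℝ) - 8) / 2) :
    -28 * k ^ 2 + (28 * (n : ℝ) - 216) * k - 4 * (n : ℝ) ^ 2 + 96 * n - 408 > 0 := by
  have hkpos : 0 < k := lt_of_le_of_lt (le_max_left _ _) hk0
  have hka : ((n : ℝ) - 10) / 2 - Real.sqrt n < k :=
    lt_of_le_of_lt (le_max_right _ _) hk0
  rcases eq_or_lt_of_le hn with h18 | h19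
  · -- n = 18
    have hN : (n : ℝ) = 18 := by exact_mod_cast congrArg (Nat.cast (R := ℝ)) h18.symm
    rw [hN] at hk1 ⊢
    nlinarith [mul_pos hkpos (sub_pos.mpr hk1)]
  · -- n ≥ 19
    have hn19 : (19 : ℝ) ≤ (n : ℝ) := by exact_mod_cast h19
    set s := Real.sqrt n with hsdef
    have hs0 : 0 ≤ s := Real.sqrt_nonneg _
    have hs2 : s ^ 2 = (n : ℝ) := Real.sq_sqrt (by positivity)
    -- f at left endpoint a = (n-10)/2 - s is 3n² - 40n - 28 - 64 s ≥ 0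
    have hfa : 64 * s ≤ 3 * (n : ℝ) ^ 2 - 40 * n - 28 := by
      nlinarith [hs2, hs0, sq_nonneg (s - 5), sq_nonneg ((n : ℝ) - 19),
        mul_nonneg (mul_nonneg (sub_nonneg.mpr hn19) (sub_nonneg.mpr hn19))
          (sub_nonneg.mpr hn19)]
    -- concavity: f(k) bounded below by chord between a and b
    have ha : ((n : ℝ) - 10) / 2 - s < k := hka
    have hb : k < ((n : ℝ) - 8) / 2 := hk1
    nlinarith [mul_pos (sub_pos.mpr ha) (sub_pos.mpr hb), hfa, hs2, hs0, hn19,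
      sq_nonneg ((n : ℝ) - 19)]
end

section
/- For every real number n ≥ 118 and every real number k with (n−10)/2 − √n < k < (n−10)/2 + √n, one has W₁(k,n) := −4k⁷ + (12n−128)k⁶ + (−12n²+324n−1696)k⁵ + (4n³−264n²+3488n−12032)k⁴ + (68n³−2168n²+19056n−49216)k³ + (376n³−8176n²+55104n−115712)k² + (−(1/16)n⁶ + (3/4)n⁵ + 732n³ − 13520n² + 78336n − 144384)k + 384n³ − 6912n² + 39936n − 73728 > 0. -/
lemma lin_lb (a s : ℝ) (ha : 0 ≤ a) : -(a * s^2)/2 - a/2 ≤ a * s := by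
  nlinarith [mul_nonneg ha (sq_nonneg (s+1))]

lemma lin_ub (a s : ℝ) (ha : 0 ≤ a) : a * s ≤ (a * s^2)/2 + a/2 := by
  nlinarith [mul_nonneg ha (sq_nonneg (s-1))]

lemma cap_le (a n x : ℝ) (ha : 0 ≤ a) (h : x ≤ n) : a * x ≤ a * n :=
  mul_le_mul_of_nonneg_left h ha

set_option maxHeartbeats 1000000 in
lemma W1_aux (n s : ℝ) (hn : 118 ≤ n) (hs : s ^ 2 < n) :
    (1/2) * n^6 + (-3/8) * n^5 * s^2 + (3/4) * n^5 * s + (-51/8) * n^5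
      + (-3/4) * n^4 * s^3 + (9/4) * n^4 * s^2 + (-9/4) * n^4 * s + (3/4) * n^4
      + (3/2) * n^3 * s^4 + 11 * n^3 * s^2 + (-28) * n^3 * s + (351/2) * n^3
      + 3 * n^2 * s^5 + (-9) * n^2 * s^4 + (-2) * n^2 * s^3 + (-10) * n^2 * s^2
      + 47 * n^2 * s + (-157) * n^2
      + (-2) * n * s^6 + (-2) * n * s^4 + 32 * n * s^3 + (-150) * n * s^2
      + 224 * n * s + (-1126) * n
      + (-4) * s^7 + 12 * s^6 + 44 * s^5 + (-132) * s^4 + (-76) * s^3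
      + 228 * s^2 + 36 * s + (-108) > 0 := by
  have hn0 : (0:ℝ) < n := by linarith
  have hs0 : (0:ℝ) ≤ s ^ 2 := sq_nonneg s
  have hs2 : s^2 ≤ n := hs.le
  have hs4 : s^4 ≤ n^2 := by nlinarith
  have hs6 : s^6 ≤ n^3 := by nlinarith [mul_nonneg hs0 hs0]
  have hs8 : s^8 ≤ n^4 := by nlinarith [mul_nonneg hs0 hs0, mul_nonneg (mul_nonneg hs0 hs0) hs0]
  -- main cushion
  have ha : (0:ℝ) ≤ (n - s^2) * n^4 := mul_nonneg (by linarith) (by positivity)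
  have hbc : n/8 ≤ n/2 + 3*s/4 := by nlinarith [sq_nonneg (s + n/2)]
  have hA : (n - s^2) * n^4 * (n/8) ≤ (n - s^2) * n^4 * (n/2 + 3*s/4) :=
    mul_le_mul_of_nonneg_left hbc ha
  -- odd-power bounds
  have o1 := lin_ub ((9/4) * n^4) s (by positivity)
  have o2 := lin_ub (28 * n^3) s (by positivity)
  have o3 := lin_lb (47 * n^2) s (by positivity)
  have o4 := lin_lb (224 * n) s (by positivity)
  have o5 := lin_lb 36 s (by norm_num)
  have o6 := lin_lb (3 * (n^2 * s^4)) s (by positivity)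
  have o7 := lin_ub (2 * (n^2 * s^2)) s (by positivity)
  have o8 := lin_lb (32 * (n * s^2)) s (by positivity)
  have o9 := lin_ub (4 * s^6) s (by positivity)
  have o10 := lin_lb (44 * s^4) s (by positivity)
  have o11 := lin_ub (76 * s^2) s (by positivity)
  -- monomial caps
  have c1 := cap_le (n^4) n (s^2) (by positivity) hs2
  have c2 := cap_le (n^3) n (s^2) (by positivity) hs2
  have c3 := cap_le (n^2) n (s^2) (by positivity) hs2
  have c4 := cap_le n n (s^2) hn0.le hs2
  have c6 := cap_le (n^2) (n^3) (s^6) (by positivity) hs6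
  have c7 := cap_le (n^2) (n^2) (s^4) (by positivity) hs4
  have c8 := cap_le n (n^3) (s^6) hn0.le hs6
  have c9 := cap_le n (n^2) (s^4) hn0.le hs4
  -- positivity of dropped terms
  have q1 : (0:ℝ) ≤ n^4*s^2 := by positivity
  have q2 : (0:ℝ) ≤ n^3*s^4 := by positivity
  have q3 : (0:ℝ) ≤ n^3*s^2 := by positivity
  have q4 : (0:ℝ) ≤ n^5*s^2 := by positivity
  have q5 : (0:ℝ) ≤ s^6 := by positivity
  -- power comparisons with 118
  have p1 : 118*n ≤ n^2 := by nlinarith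
  have p2 : 118*n^2 ≤ n^3 := by nlinarith [pow_pos hn0 2]
  have p3 : 118*n^3 ≤ n^4 := by nlinarith [pow_pos hn0 3]
  have p4 : 118*n^4 ≤ n^5 := by nlinarith [pow_pos hn0 4]
  have p5 : 118*n^5 ≤ n^6 := by nlinarith [pow_pos hn0 5]
  linarith [hA, o1, o2, o3, o4, o5, o6, o7, o8, o9, o10, o11,
    c1, c2, c3, c4, c6, c7, c8, c9, q1, q2, q3, q4, q5, hs0,
    p1, p2, p3, p4, p5, hs2, hs4, hs6, hs8, hn]

/-- Positivity of `W₁ = k(pJ₁ − q₁)` for `n ≥ 118` and `(n−10)/2 − √n < k < (n−10)/2 + √n`. -/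
theorem W1_pos (n k : ℝ) (hn : 118 ≤ n)
    (hk0 : (n - 10) / 2 - Real.sqrt n < k) (hk1 : k < (n - 10) / 2 + Real.sqrt n) :
    -4 * k ^ 7 + (12 * n - 128) * k ^ 6 + (-12 * n ^ 2 + 324 * n - 1696) * k ^ 5
      + (4 * n ^ 3 - 264 * n ^ 2 + 3488 * n - 12032) * k ^ 4
      + (68 * n ^ 3 - 2168 * n ^ 2 + 19056 * n - 49216) * k ^ 3
      + (376 * n ^ 3 - 8176 * n ^ 2 + 55104 * n - 115712) * k ^ 2
      + (-(1 / 16) * n ^ 6 + (3 / 4) * n ^ 5 + 732 * n ^ 3 - 13520 * n ^ 2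
          + 78336 * n - 144384) * k
      + 384 * n ^ 3 - 6912 * n ^ 2 + 39936 * n - 73728 > 0 := by
  have hs : (k - (n - 10) / 2) ^ 2 < n := by
    have h1 : -Real.sqrt n < k - (n - 10) / 2 := by linarith
    have h2 : k - (n - 10) / 2 < Real.sqrt n := by linarith
    have h3 := sq_lt_sq' h1 h2
    rwa [Real.sq_sqrt (by linarith : (0:ℝ) ≤ n)] at h3
  have h := W1_aux n (k - (n - 10) / 2) hn hs
  set s : ℝ := k - (n - 10) / 2 with hsdef
  have e : -4 * k ^ 7 + (12 * n - 128) * k ^ 6 + (-12 * n ^ 2 + 324 * n - 1696) * k ^ 5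
      + (4 * n ^ 3 - 264 * n ^ 2 + 3488 * n - 12032) * k ^ 4
      + (68 * n ^ 3 - 2168 * n ^ 2 + 19056 * n - 49216) * k ^ 3
      + (376 * n ^ 3 - 8176 * n ^ 2 + 55104 * n - 115712) * k ^ 2
      + (-(1 / 16) * n ^ 6 + (3 / 4) * n ^ 5 + 732 * n ^ 3 - 13520 * n ^ 2
          + 78336 * n - 144384) * k
      + 384 * n ^ 3 - 6912 * n ^ 2 + 39936 * n - 73728
      = (1/2) * n^6 + (-3/8) * n^5 * s^2 + (3/4) * n^5 * s + (-51/8) * n^5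
      + (-3/4) * n^4 * s^3 + (9/4) * n^4 * s^2 + (-9/4) * n^4 * s + (3/4) * n^4
      + (3/2) * n^3 * s^4 + 11 * n^3 * s^2 + (-28) * n^3 * s + (351/2) * n^3
      + 3 * n^2 * s^5 + (-9) * n^2 * s^4 + (-2) * n^2 * s^3 + (-10) * n^2 * s^2
      + 47 * n^2 * s + (-157) * n^2
      + (-2) * n * s^6 + (-2) * n * s^4 + 32 * n * s^3 + (-150) * n * s^2
      + 224 * n * s + (-1126) * n
      + (-4) * s^7 + 12 * s^6 + 44 * s^5 + (-132) * s^4 + (-76) * s^3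
      + 228 * s^2 + 36 * s + (-108) := by rw [hsdef]; ring
  rw [e]
  exact h
end

section
/- For every real number n ≥ 30 and every real number k with (n−10)/2 − √n < k < (n−10)/2 + √n, one has W₂(k,n) := 6k⁵ + (144−12n)k⁴ + (6n²−228n+1352)k³ + (84n²−1544n+6272)k² + (−(3/8)n⁴ + 3n³ + 338n² − 4512n + 14464)k + 352n² − 4480n + 13824 > 0. -/
set_option maxHeartbeats 1000000

/-- Positivity of `W₂ = k(pJ₂ − q₂)` for `n ≥ 30` and `(n−10)/2 − √n < k < (n−10)/2 + √n`. -/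
theorem W2_pos (n k : ℝ) (hn : 30 ≤ n)
    (hk0 : (n - 10) / 2 - Real.sqrt n < k) (hk1 : k < (n - 10) / 2 + Real.sqrt n) :
    6 * k ^ 5 + (144 - 12 * n) * k ^ 4 + (6 * n ^ 2 - 228 * n + 1352) * k ^ 3
      + (84 * n ^ 2 - 1544 * n + 6272) * k ^ 2
      + (-(3 / 8) * n ^ 4 + 3 * n ^ 3 + 338 * n ^ 2 - 4512 * n + 14464) * k
      + 352 * n ^ 2 - 4480 * n + 13824 > 0 := by
  set s : ℝ := Real.sqrt n with hs_def
  have hn0 : (0:ℝ) ≤ n := by linarith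
  have hs2 : s ^ 2 = n := Real.sq_sqrt hn0
  have hs0 : 0 ≤ s := Real.sqrt_nonneg n
  have hs5 : 5 ≤ s := by nlinarith [hs2]
  obtain ⟨t, rfl⟩ : ∃ t, k = (n - 10) / 2 + t := ⟨k - (n - 10) / 2, by ring⟩
  have ht1 : -s < t := by linarith
  have ht2 : t < s := by linarith
  have ht2n : t ^ 2 < n := by nlinarith [mul_pos (by linarith : (0:ℝ) < s - t) (by linarith : (0:ℝ) < s + t)]
  -- Step 1: t^4 * (6t + 3n - 6) ≥ 0
  have h1 : t ^ 4 * (6 * t + 3 * n - 6) ≥ 0 := by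
    have h6s : 6 * s ≤ (6/5) * n := by nlinarith
    have : 6 * t + 3 * n - 6 > 0 := by nlinarith
    positivity
  -- Step 2: A2 * t^2 ≥ A2 * n
  have h2 : (-(3/2) * n ^ 3 + 3 * n ^ 2 + 34 * n + 92) * t ^ 2
      ≥ (-(3/2) * n ^ 3 + 3 * n ^ 2 + 34 * n + 92) * n := by
    have hA2 : -(3/2) * n ^ 3 + 3 * n ^ 2 + 34 * n + 92 ≤ 0 := by nlinarith
    nlinarith [sq_nonneg t]
  -- Step 3: (A1 + A3 t^2) * t ≥ -A1 * s
  have h3 : ((3 * n ^ 3 + 3 * n ^ 2 - 80 * n - 106) + (-3 * n ^ 2 - 28) * t ^ 2) * t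
      ≥ -(3 * n ^ 3 + 3 * n ^ 2 - 80 * n - 106) * s := by
    set A1 : ℝ := 3 * n ^ 3 + 3 * n ^ 2 - 80 * n - 106 with hA1
    set B : ℝ := A1 + (-3 * n ^ 2 - 28) * t ^ 2 with hB
    have hBu : B ≤ A1 := by nlinarith [sq_nonneg t]
    have hBl : -A1 ≤ B := by nlinarith
    nlinarith [mul_nonneg (by linarith : (0:ℝ) ≤ s + t) (by linarith : (0:ℝ) ≤ A1 + B),
      mul_nonneg (by linarith : (0:ℝ) ≤ s - t) (by linarith : (0:ℝ) ≤ A1 - B)]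
  -- Step 4: final bound P - A1 * s > 0, everything in s
  have ha : (0:ℝ) ≤ s ^ 2 - 30 := by nlinarith
  have hb : (0:ℝ) ≤ s - 5 := by linarith
  have h4 : (3/2) * n ^ 4 - (45/2) * n ^ 3 - 17 * n ^ 2 + 519 * n + 554
      - (3 * n ^ 3 + 3 * n ^ 2 - 80 * n - 106) * s > 0 := by
    have hn' : n = s ^ 2 := hs2.symm
    rw [hn']
    have e : (3/2) * (s^2) ^ 4 - (45/2) * (s^2) ^ 3 - 17 * (s^2) ^ 2 + 519 * (s^2) + 554
        - (3 * (s^2) ^ 3 + 3 * (s^2) ^ 2 - 80 * (s^2) - 106) * s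
        = 3/4 * ((s^2 - 30) * s^6) + 3/4 * ((s - 5) * s^7) + 3/4 * ((s^2 - 30) * s^5)
          + (39/2 * s - 17) * s^4 + 80 * s^3 + 519 * s^2 + 106 * s + 554 := by ring
    rw [e]
    have p1 : (0:ℝ) ≤ (s^2 - 30) * s^6 := mul_nonneg ha (by positivity)
    have p2 : (0:ℝ) ≤ (s - 5) * s^7 := mul_nonneg hb (by positivity)
    have p3 : (0:ℝ) ≤ (s^2 - 30) * s^5 := mul_nonneg ha (by positivity)
    have p4 : (0:ℝ) ≤ (39/2 * s - 17) * s^4 :=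
      mul_nonneg (by linarith) (by positivity)
    have p5 : (0:ℝ) ≤ s^3 := by positivity
    have p6 : (0:ℝ) ≤ s^2 := by positivity
    linarith
  have hW : 6 * ((n - 10) / 2 + t) ^ 5 + (144 - 12 * n) * ((n - 10) / 2 + t) ^ 4
      + (6 * n ^ 2 - 228 * n + 1352) * ((n - 10) / 2 + t) ^ 3
      + (84 * n ^ 2 - 1544 * n + 6272) * ((n - 10) / 2 + t) ^ 2
      + (-(3 / 8) * n ^ 4 + 3 * n ^ 3 + 338 * n ^ 2 - 4512 * n + 14464) * ((n - 10) / 2 + t)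
      + 352 * n ^ 2 - 4480 * n + 13824
      = t ^ 4 * (6 * t + 3 * n - 6)
        + (-(3/2) * n ^ 3 + 3 * n ^ 2 + 34 * n + 92) * t ^ 2
        + ((3 * n ^ 3 + 3 * n ^ 2 - 80 * n - 106) + (-3 * n ^ 2 - 28) * t ^ 2) * t
        + (3 * n ^ 4 - (51/2) * n ^ 3 - 51 * n ^ 2 + 427 * n + 554) := by ring
  rw [hW]
  have hrel : (3 * n ^ 4 - (51/2) * n ^ 3 - 51 * n ^ 2 + 427 * n + 554)
      + (-(3/2) * n ^ 3 + 3 * n ^ 2 + 34 * n + 92) * n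
      = (3/2) * n ^ 4 - (45/2) * n ^ 3 - 17 * n ^ 2 + 519 * n + 554 := by ring
  linarith [h1, h2, h3, h4, hrel]
end

section
/- For every real number n ≥ 12 and every real number k with (n−10)/2 − √n < k < (n−10)/2 + √n, one has W₃(k,n) := −4k³ + (4n−64)k² + (−n²+48n−320)k + 96n − 640 > 0. -/
lemma W3_aux (s t : ℝ) (hs3 : 3 ≤ s) (hs12 : 12 ≤ s^2) (ht0 : -s < t) (ht1 : t < s) :
    -4*t^3 - (2*s^2+4)*t^2 + (4*s^2+20)*t + 8*s^4-34*s^2-140 > 0 := by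
  have h1 : (0:ℝ) < s - t := by linarith
  have h2 : (0:ℝ) < s + t := by linarith
  have h3 : (0:ℝ) < (s-t)*(s+t) := mul_pos h1 h2
  nlinarith [mul_pos h3 h2, mul_pos h3 h1, mul_pos h3 (by linarith : (0:ℝ) < s),
    sq_nonneg (s^2-12), sq_nonneg (s-3), mul_nonneg (sq_nonneg (s-3)) (by linarith : (0:ℝ) ≤ s),
    mul_pos (mul_pos h1 h2) (mul_pos h1 h2), sq_nonneg t, sq_nonneg (t+1), sq_nonneg (s*t)]

/-- Positivity of `W₃ = k(pJ₃ − q₃)` for `n ≥ 12` and `(n−10)/2 − √n < k < (n−10)/2 + √n`. -/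
theorem W3_pos (n k : ℝ) (hn : 12 ≤ n)
    (hk0 : (n - 10) / 2 - Real.sqrt n < k) (hk1 : k < (n - 10) / 2 + Real.sqrt n) :
    -4 * k ^ 3 + (4 * n - 64) * k ^ 2 + (-n ^ 2 + 48 * n - 320) * k + 96 * n - 640 > 0 := by
  set s := Real.sqrt n with hs
  have hn0 : (0:ℝ) ≤ n := by linarith
  have hs2 : s ^ 2 = n := Real.sq_sqrt hn0
  have hs12 : 12 ≤ s ^ 2 := by linarith
  have hs3 : (3:ℝ) ≤ s := by nlinarith [Real.sqrt_nonneg n, hs2]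
  set t := k - (n - 10) / 2 with ht
  have ht0 : -s < t := by rw [ht]; linarith
  have ht1 : t < s := by rw [ht]; linarith
  have key := W3_aux s t hs3 hs12 ht0 ht1
  have hkeq : k = s ^ 2 / 2 - 5 + t := by rw [ht, hs2]; ring
  have hgoal : -4 * k ^ 3 + (4 * n - 64) * k ^ 2 + (-n ^ 2 + 48 * n - 320) * k + 96 * n - 640
      = -4*t^3 - (2*s^2+4)*t^2 + (4*s^2+20)*t + 8*s^4-34*s^2-140 := by
    rw [hkeq, ← hs2]; ring
  linarith [hgoal ▸ key]
end
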